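/- Let β ∈ (1,2) with β^m = β^{m−1}+⋯+β+1 for some integer m ≥ 2, let b ∈ [0, 1/(β−1) − 1), and define T : [0,1/(β−1)] → ℝ by T(x) = βx for x < (b+1)/β and T(x) = βx − 1 otherwise. Then for all 1 ≤ n ≤ m−1: T^n(b) = β^n b < (b+1)/β ≤ β^n b + β^n − β^{n−1} − ⋯ − β − 1 = T^n(b+1). -/

import Mathlib

theorem stmt9 (β : ℝ) (m : ℕ) (hm : 2 ≤ m) (hβ : β ∈ Set.Ioo (1 : ℝ) 2)
    (hpg : β ^ m = ∑ i ∈ Finset.range m, β ^ i)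
    (b : ℝ) (hb : b ∈ Set.Ico 0 (1 / (β - 1) - 1))
    (T : ℝ → ℝ) (hT : ∀ x, T x = if x < (b + 1) / β then β * x else β * x - 1) :
    ∀ n : ℕ, 1 ≤ n → n ≤ m - 1 →
      T^[n] b = β ^ n * b ∧
      β ^ n * b < (b + 1) / β ∧
      (b + 1) / β ≤ β ^ n * b + β ^ n - ∑ i ∈ Finset.range n, β ^ i ∧
      T^[n] (b + 1) = β ^ n * b + β ^ n - ∑ i ∈ Finset.range n, β ^ i := by
  obtain ⟨hβ1, hβ2⟩ := hβ
  obtain ⟨hb0, hbu⟩ := hb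
  have hβ0 : (0:ℝ) < β := by linarith
  have hβ1' : (0:ℝ) < β - 1 := by linarith
  have hβm : β ^ m * (2 - β) = 1 := by
    have h := geom_sum_mul β m
    rw [← hpg] at h
    nlinarith [h]
  have hkey : ∀ k, k ≤ m → β ^ k * (2 - β) ≤ 1 := by
    intro k hk
    have h1 : β ^ k ≤ β ^ m := pow_le_pow_right₀ (le_of_lt hβ1) hk
    nlinarith
  have hbm : b * (β - 1) < 2 - β := by
    have h := mul_lt_mul_of_pos_right hbu hβ1'
    rw [sub_mul, one_div, inv_mul_cancel₀ (ne_of_gt hβ1')] at h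
    linarith
  have hA : ∀ n, n + 1 ≤ m → β ^ n * b < (b + 1) / β := by
    intro n hn
    rw [lt_div_iff₀ hβ0]
    have hk := hkey (n+1) hn
    have hp : (0:ℝ) < β ^ (n+1) := pow_pos hβ0 _
    have h1 : β ^ n * b * β = β ^ (n+1) * b := by ring
    rw [h1]
    nlinarith [mul_lt_mul_of_pos_left hbm hp, mul_le_mul_of_nonneg_left hk hb0]
  have hB : ∀ n, n + 1 ≤ m →
      (b + 1) / β ≤ β ^ n * b + β ^ n - ∑ i ∈ Finset.range n, β ^ i := by
    intro n hn
    have hs : (∑ i ∈ Finset.range n, β ^ i) * (β - 1) = β ^ n - 1 := geom_sum_mul β n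
    have hk := hkey (n+1) hn
    have hP1 : (1:ℝ) ≤ β ^ (n+1) := one_le_pow₀ (le_of_lt hβ1)
    rw [div_le_iff₀ hβ0]
    have hsβ : (∑ i ∈ Finset.range n, β ^ i) * (β - 1) * β = (β ^ n - 1) * β := by
      rw [hs]
    have key : 0 ≤ b * (β - 1) * (β ^ (n+1) - 1) + (1 - β ^ (n+1) * (2 - β)) := by
      have := mul_nonneg (mul_nonneg hb0 hβ1'.le) (sub_nonneg.2 hP1)
      linarith
    have h2 : (b + 1) * (β - 1) ≤
        (β ^ n * b + β ^ n - ∑ i ∈ Finset.range n, β ^ i) * β * (β - 1) := by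
      have e : (β ^ n * b + β ^ n - ∑ i ∈ Finset.range n, β ^ i) * β * (β - 1)
            - (b + 1) * (β - 1)
          = b * (β - 1) * (β ^ (n+1) - 1) + (1 - β ^ (n+1) * (2 - β))
            + ((β ^ n - 1) * β - (∑ i ∈ Finset.range n, β ^ i) * (β - 1) * β) := by
        ring
      linarith [key, hsβ, e]
    exact le_of_mul_le_mul_right h2 hβ1'
  have main : ∀ n, n ≤ m - 1 →
      T^[n] b = β ^ n * b ∧
      β ^ n * b < (b + 1) / β ∧
      (b + 1) / β ≤ β ^ n * b + β ^ n - ∑ i ∈ Finset.range n, β ^ i ∧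
      T^[n] (b + 1) = β ^ n * b + β ^ n - ∑ i ∈ Finset.range n, β ^ i := by
    intro n
    induction n with
    | zero =>
      intro _
      refine ⟨by simp, ?_, ?_, by simp⟩
      · simpa using hA 0 (by omega)
      · simpa using hB 0 (by omega)
    | succ k ih =>
      intro hk1
      obtain ⟨e1, l2, l3, e4⟩ := ih (by omega)
      have hkm : k + 1 + 1 ≤ m := by omega
      refine ⟨?_, hA (k+1) hkm, hB (k+1) hkm, ?_⟩
      · rw [Function.iterate_succ_apply', e1, hT, if_pos l2]
        ring
      · rw [Function.iterate_succ_apply', e4, hT, if_neg (not_lt.2 l3),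
          geom_sum_succ]
        ring
  intro n _ hn
  exact main n hn
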